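/- Let X, Y ⊆ ℝ^K be finite sets. If for every v ∈ ℝ^K and b ∈ ℝ we have Σ_{x∈X} ReLU(⟨v,x⟩ + b) = Σ_{y∈Y} ReLU(⟨v,y⟩ + b), then X = Y. -/

import Mathlib

-- multiset lemma
lemma relu_card (n : ℕ) : ∀ s t : Multiset ℝ, Multiset.card s = n →
    (∀ b : ℝ, (s.map (fun a => max (a + b) 0)).sum = (t.map (fun a => max (a + b) 0)).sum) →
    s = t := by
  induction n with
  | zero =>
    intro s t hc h
    rw [Multiset.card_eq_zero] at hc
    subst hc
    by_contra ht
    obtain ⟨a, ha⟩ := Multiset.exists_mem_of_ne_zero (Ne.symm ht)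
    have h1 := h (1 - a)
    simp only [Multiset.map_zero, Multiset.sum_zero] at h1
    have hle : max (a + (1 - a)) 0 ≤ (t.map (fun c => max (c + (1 - a)) 0)).sum :=
      Multiset.single_le_sum (by intro x hx; obtain ⟨c, _, rfl⟩ := Multiset.mem_map.1 hx; positivity)
        _ (Multiset.mem_map_of_mem _ ha)
    rw [← h1] at hle
    simp at hle
    linarith
  | succ n ih =>
    intro s t hc h
    have hs0 : s ≠ 0 := by
      intro h0; rw [h0] at hc; simp at hc
    have ht0 : t ≠ 0 := by
      intro h0
      subst h0
      obtain ⟨a, ha⟩ := Multiset.exists_mem_of_ne_zero hs0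
      have h1 := h (1 - a)
      simp only [Multiset.map_zero, Multiset.sum_zero] at h1
      have hle : max (a + (1 - a)) 0 ≤ (s.map (fun c => max (c + (1 - a)) 0)).sum :=
        Multiset.single_le_sum (by intro x hx; obtain ⟨c, _, rfl⟩ := Multiset.mem_map.1 hx; positivity)
          _ (Multiset.mem_map_of_mem _ ha)
      rw [h1] at hle
      simp at hle
      linarith
    -- maxima
    have hsne : s.toFinset.Nonempty := by
      obtain ⟨a, ha⟩ := Multiset.exists_mem_of_ne_zero hs0
      exact ⟨a, Multiset.mem_toFinset.2 ha⟩
    have htne : t.toFinset.Nonempty := by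
      obtain ⟨a, ha⟩ := Multiset.exists_mem_of_ne_zero ht0
      exact ⟨a, Multiset.mem_toFinset.2 ha⟩
    set ms := s.toFinset.max' hsne with hms
    set mt := t.toFinset.max' htne with hmt
    have hms_mem : ms ∈ s := Multiset.mem_toFinset.1 (s.toFinset.max'_mem hsne)
    have hmt_mem : mt ∈ t := Multiset.mem_toFinset.1 (t.toFinset.max'_mem htne)
    have hms_le : ∀ a ∈ s, a ≤ ms := fun a ha => s.toFinset.le_max' a (Multiset.mem_toFinset.2 ha)
    have hmt_le : ∀ a ∈ t, a ≤ mt := fun a ha => t.toFinset.le_max' a (Multiset.mem_toFinset.2 ha)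
    -- key: the big-max side dominates
    have key : ∀ (u w : Multiset ℝ) (mu mw : ℝ), mu ∈ u → (∀ a ∈ w, a ≤ mw) →
        (∀ b : ℝ, (u.map (fun a => max (a + b) 0)).sum = (w.map (fun a => max (a + b) 0)).sum) →
        mu ≤ mw := by
      intro u w mu mw hmu hmw hb
      by_contra hlt
      push_neg at hlt
      set b := -(mu + mw) / 2 with hbdef
      have hw : (w.map (fun a => max (a + b) 0)).sum = 0 := by
        apply Multiset.sum_eq_zero
        intro x hx
        obtain ⟨c, hc, rfl⟩ := Multiset.mem_map.1 hx
        have := hmw c hc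
        have : c + b ≤ 0 := by rw [hbdef]; linarith
        simp [max_eq_right this]
      have hu : max (mu + b) 0 ≤ (u.map (fun a => max (a + b) 0)).sum :=
        Multiset.single_le_sum (by intro x hx; obtain ⟨c, _, rfl⟩ := Multiset.mem_map.1 hx; positivity)
          _ (Multiset.mem_map_of_mem _ hmu)
      have hub := hb b
      rw [hw] at hub
      rw [hub] at hu
      have : mu + b = (mu - mw) / 2 := by rw [hbdef]; ring
      rw [this] at hu
      have : (0:ℝ) < (mu - mw) / 2 := by linarith
      rw [max_eq_left this.le] at hu
      linarith
    have hmm : ms = mt :=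
      le_antisymm (key s t ms mt hms_mem hmt_le h)
        (key t s mt ms hmt_mem hms_le (fun b => (h b).symm))
    -- remove max from both
    have hs' : s = ms ::ₘ s.erase ms := (Multiset.cons_erase hms_mem).symm
    have ht' : t = ms ::ₘ t.erase ms := by
      rw [hmm]; exact (Multiset.cons_erase hmt_mem).symm
    have hc' : Multiset.card (s.erase ms) = n := by
      have := congrArg Multiset.card hs'
      rw [Multiset.card_cons, hc] at this
      omega
    have heq : s.erase ms = t.erase ms := by
      apply ih _ _ hc'
      intro b
      have hb := h b
      rw [hs'] at hb
      rw [ht'] at hb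
      simp only [Multiset.map_cons, Multiset.sum_cons] at hb
      linarith
    rw [hs', ht', heq]

lemma exists_sep {K : ℕ} (S : Finset (EuclideanSpace ℝ (Fin K))) :
    ∃ v : EuclideanSpace ℝ (Fin K),
      ∀ x ∈ S, ∀ y ∈ S, (inner ℝ v x : ℝ) = (inner ℝ v y : ℝ) → x = y := by
  classical
  let E := EuclideanSpace ℝ (Fin K)
  set T : Finset (Subspace ℝ E) :=
    ((S ×ˢ S).filter (fun p => p.1 ≠ p.2)).image
      (fun p => LinearMap.ker ((innerSL ℝ (p.1 - p.2) : E →L[ℝ] ℝ).toLinearMap)) with hT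
  have htop : ⊤ ∉ T := by
    intro htop
    obtain ⟨p, hp, hker⟩ := Finset.mem_image.1 htop
    have hpne : p.1 ≠ p.2 := (Finset.mem_filter.1 hp).2
    have hz : p.1 - p.2 ≠ 0 := sub_ne_zero.2 hpne
    have : (inner ℝ (p.1 - p.2) (p.1 - p.2) : ℝ) = 0 := by
      have : (p.1 - p.2 : E) ∈ (⊤ : Subspace ℝ E) := Submodule.mem_top
      rw [← hker, LinearMap.mem_ker] at this
      exact this
    exact hz (inner_self_eq_zero.1 this)
  have hne := Subspace.biUnion_ne_univ_of_top_notMem htop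
  rw [Set.ne_univ_iff_exists_notMem] at hne
  obtain ⟨v, hv⟩ := hne
  refine ⟨v, fun x hx y hy hxy => ?_⟩
  by_contra hne'
  apply hv
  simp only [Set.mem_iUnion]
  refine ⟨_, Finset.mem_image.2 ⟨(x, y), Finset.mem_filter.2 ⟨Finset.mem_product.2 ⟨hx, hy⟩, hne'⟩, rfl⟩, ?_⟩
  show v ∈ LinearMap.ker _
  rw [LinearMap.mem_ker]
  show (inner ℝ (x - y) v : ℝ) = 0
  rw [inner_sub_left]
  rw [real_inner_comm x v, real_inner_comm y v] at *
  linarith [hxy]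

theorem stmt_7 {K : ℕ} (X Y : Finset (EuclideanSpace ℝ (Fin K)))
    (h : ∀ (v : EuclideanSpace ℝ (Fin K)) (b : ℝ),
      ∑ x ∈ X, max ((inner ℝ v x : ℝ) + b) 0 = ∑ y ∈ Y, max ((inner ℝ v y : ℝ) + b) 0) :
    X = Y := by
  classical
  obtain ⟨v, hv⟩ := exists_sep (X ∪ Y)
  set f : EuclideanSpace ℝ (Fin K) → ℝ := fun x => (inner ℝ v x : ℝ) with hf
  have hmult : X.val.map f = Y.val.map f := by
    apply relu_card (Multiset.card (X.val.map f)) _ _ rfl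
    intro b
    rw [Multiset.map_map, Multiset.map_map]
    exact h v b
  apply Finset.ext
  intro a
  constructor
  · intro ha
    have : f a ∈ Y.val.map f := by rw [← hmult]; exact Multiset.mem_map_of_mem f ha
    obtain ⟨y, hy, hya⟩ := Multiset.mem_map.1 this
    have := hv y (Finset.mem_union_right _ hy) a (Finset.mem_union_left _ ha) hya
    rwa [← this]
  · intro ha
    have : f a ∈ X.val.map f := by rw [hmult]; exact Multiset.mem_map_of_mem f ha
    obtain ⟨x, hx, hxa⟩ := Multiset.mem_map.1 this
    have := hv x (Finset.mem_union_left _ hx) a (Finset.mem_union_right _ ha) hxa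
    rwa [← this]
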